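/- arXiv:2310.19259 — 2 statements merged into one kernel-verified Lean document; each statement's English description precedes it below -/
import Mathlib

section
/- For every connected graph G of order n with e(G) edges, the distance signless Laplacian spectral radius satisfies μ₁(D^Q(G)) ≥ 4(n − 1) − 4e(G)/n. -/
open scoped Classical
open Finset

/-- The distance matrix of a graph: the `(u,v)` entry is the graph distance between `u` and `v`. -/
noncomputable def distMatrix {n : ℕ} (G : SimpleGraph (Fin n)) : Matrix (Fin n) (Fin n) ℝ :=
  fun u v => (G.dist u v : ℝ)

/-- The largest (real) eigenvalue of a matrix, i.e. the spectral radius for matrices such as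
distance matrices of connected graphs. -/
noncomputable def specMax {n : ℕ} (M : Matrix (Fin n) (Fin n) ℝ) : ℝ :=
  sSup {t : ℝ | ∃ x : Fin n → ℝ, x ≠ 0 ∧ M.mulVec x = t • x}

/-- The transmission of a vertex: the sum of the distances to all other vertices. -/
noncomputable def transmission {n : ℕ} (G : SimpleGraph (Fin n)) (v : Fin n) : ℕ :=
  ∑ u, G.dist v u

/-- The distance signless Laplacian matrix `Tr(G) + D(G)`. -/
noncomputable def distSignlessLapMatrix {n : ℕ} (G : SimpleGraph (Fin n)) :
    Matrix (Fin n) (Fin n) ℝ :=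
  Matrix.diagonal (fun v => (transmission G v : ℝ)) + distMatrix G

/-- The transmission `σ(G)` of a graph: the sum of distances over all unordered pairs. -/
noncomputable def transSigma {n : ℕ} (G : SimpleGraph (Fin n)) : ℝ :=
  (∑ v, (transmission G v : ℝ)) / 2

/-- The sum of `h` over the edges incident with `v`. -/
noncomputable def incSum {n : ℕ} (G : SimpleGraph (Fin n)) (h : Sym2 (Fin n) → ℝ) (v : Fin n) :
    ℝ :=
  ∑ e ∈ Finset.univ.filter (fun e => e ∈ G.incidenceSet v), h e

/-- `h` is (the indicator function of) a fractional `[a,b]`-factor of `G`. -/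
def IsFractionalABFactor {n : ℕ} (G : SimpleGraph (Fin n)) (a b : ℕ)
    (h : Sym2 (Fin n) → ℝ) : Prop :=
  (∀ e, 0 ≤ h e ∧ h e ≤ 1) ∧ (∀ e, e ∉ G.edgeSet → h e = 0) ∧
    ∀ v, (a : ℝ) ≤ incSum G h v ∧ incSum G h v ≤ (b : ℝ)

/-- `G` has a fractional `[a,b]`-factor. -/
def HasFractionalABFactor {n : ℕ} (G : SimpleGraph (Fin n)) (a b : ℕ) : Prop :=
  ∃ h, IsFractionalABFactor G a b h

/-- `G` is a fractional `[a,b]`-deleted graph: `G - e` has a fractional `[a,b]`-factor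
for every edge `e` of `G`. -/
def IsFractionalABDeleted {n : ℕ} (G : SimpleGraph (Fin n)) (a b : ℕ) : Prop :=
  ∀ e ∈ G.edgeSet, HasFractionalABFactor (G.deleteEdges {e}) a b

/-- `G` has a `k`-factor: a spanning `k`-regular subgraph. -/
def HasKFactor {n : ℕ} (G : SimpleGraph (Fin n)) (k : ℕ) : Prop :=
  ∃ H : SimpleGraph (Fin n), H ≤ G ∧ ∀ v, H.degree v = k

/-- `G` is ID-factor-critical: for every independent set `I` whose size has the same parity
as `n`, the graph `G - I` has a perfect matching. -/
def IsIDFactorCritical {n : ℕ} (G : SimpleGraph (Fin n)) : Prop :=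
  ∀ I : Finset (Fin n), (∀ u ∈ I, ∀ v ∈ I, ¬ G.Adj u v) → I.card % 2 = n % 2 →
    ∃ M : (G.induce ((I : Set (Fin n))ᶜ)).Subgraph, M.IsPerfectMatching

/-- The graph `I_r ∨ K_r ∨ (K_{n-3r-1} + I_{r+1})` on `Fin n`: vertices `< r` form the
independent set `I_r`, vertices in `[r, 2r)` form the clique `K_r`, vertices in `[2r, n-r-1)`
form the clique `K_{n-3r-1}`, and vertices in `[n-r-1, n)` form the independent set `I_{r+1}`;
all join edges are present except between `K_{n-3r-1}` and `I_{r+1}`. -/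
def extremalGraph (n r : ℕ) : SimpleGraph (Fin n) where
  Adj u v := u ≠ v ∧ ¬((u : ℕ) < r ∧ (v : ℕ) < r) ∧
    ¬(n - r - 1 ≤ (u : ℕ) ∧ n - r - 1 ≤ (v : ℕ)) ∧
    ¬((2 * r ≤ (u : ℕ) ∧ (u : ℕ) < n - r - 1) ∧ n - r - 1 ≤ (v : ℕ)) ∧
    ¬((2 * r ≤ (v : ℕ) ∧ (v : ℕ) < n - r - 1) ∧ n - r - 1 ≤ (u : ℕ))
  symm := ⟨fun u v ⟨h1, h2, h3, h4, h5⟩ =>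
    ⟨h1.symm, fun h => h2 ⟨h.2, h.1⟩, fun h => h3 ⟨h.2, h.1⟩, h5, h4⟩⟩
  loopless := ⟨fun v h => h.1 rfl⟩


section Aux

open Finset Matrix

private lemma bddAbove_spec_aux {n : ℕ} (M : Matrix (Fin n) (Fin n) ℝ) :
    BddAbove {t : ℝ | ∃ x : Fin n → ℝ, x ≠ 0 ∧ M.mulVec x = t • x} := by
  refine ⟨∑ i, ∑ j, |M i j|, ?_⟩
  rintro t ⟨x, hx, hMx⟩
  obtain ⟨i, -, hmax⟩ := Finset.exists_max_image univ (fun i => |x i|) (by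
    obtain ⟨j, hj⟩ := Function.ne_iff.mp hx
    exact ⟨j, mem_univ j⟩)
  have hipos : 0 < |x i| := by
    obtain ⟨j, hj⟩ := Function.ne_iff.mp hx
    exact lt_of_lt_of_le (abs_pos.mpr hj) (hmax j (mem_univ j))
  have key : t * x i = ∑ j, M i j * x j := by
    have h := congrFun hMx i
    simp only [Matrix.mulVec, dotProduct, Pi.smul_apply, smul_eq_mul] at h
    rw [← h]
  have h1 : |t| * |x i| ≤ (∑ j, |M i j|) * |x i| := by
    calc |t| * |x i| = |t * x i| := (abs_mul t (x i)).symm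
      _ = |∑ j, M i j * x j| := by rw [key]
      _ ≤ ∑ j, |M i j * x j| := Finset.abs_sum_le_sum_abs _ _
      _ ≤ ∑ j, |M i j| * |x i| := by
          refine Finset.sum_le_sum fun j _ => ?_
          rw [abs_mul]
          exact mul_le_mul_of_nonneg_left (hmax j (mem_univ j)) (abs_nonneg _)
      _ = (∑ j, |M i j|) * |x i| := by rw [Finset.sum_mul]
  have h2 : |t| ≤ ∑ j, |M i j| := le_of_mul_le_mul_right h1 hipos
  calc t ≤ |t| := le_abs_self t
    _ ≤ ∑ j, |M i j| := h2
    _ ≤ ∑ i, ∑ j, |M i j| := Finset.single_le_sum (f := fun i => ∑ j, |M i j|)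
        (fun i _ => Finset.sum_nonneg fun j _ => abs_nonneg _) (mem_univ i)

private lemma rayleigh_ones_aux {n : ℕ} (M : Matrix (Fin n) (Fin n) ℝ) (hM : M.IsHermitian)
    (hBdd : BddAbove {t : ℝ | ∃ x : Fin n → ℝ, x ≠ 0 ∧ M.mulVec x = t • x}) :
    ∑ u, ∑ v, M u v ≤
      sSup {t : ℝ | ∃ x : Fin n → ℝ, x ≠ 0 ∧ M.mulVec x = t • x} * n := by
  classical
  set b := hM.eigenvectorBasis with hb
  set B : Fin n → Fin n → ℝ := fun i j => b i j with hB
  have h1 : ∀ i k, ∑ j, B i j * B k j = if i = k then (1:ℝ) else 0 := by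
    intro i k
    have := orthonormal_iff_ite.mp b.orthonormal i k
    rw [PiLp.inner_apply] at this
    simpa [RCLike.inner_apply, mul_comm] using this
  have h2 : ∀ j k, ∑ i, B i j * B i k = if j = k then (1:ℝ) else 0 := by
    have hPP : (Matrix.of B) * (Matrix.of B)ᵀ = 1 := by
      ext i k
      simp only [Matrix.mul_apply, Matrix.transpose_apply, Matrix.of_apply, Matrix.one_apply]
      exact h1 i k
    have hPP' : (Matrix.of B)ᵀ * (Matrix.of B) = 1 := mul_eq_one_comm.mp hPP
    intro j k
    have := congrFun (congrFun hPP' j) k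
    simp only [Matrix.mul_apply, Matrix.transpose_apply, Matrix.of_apply, Matrix.one_apply] at this
    exact this
  have heig : ∀ i u, ∑ j, M u j * B i j = hM.eigenvalues i * B i u := by
    intro i u
    have := congrFun (hM.mulVec_eigenvectorBasis i) u
    simpa [Matrix.mulVec, dotProduct] using this
  set c : Fin n → ℝ := fun i => ∑ j, B i j with hc
  have hones : ∀ j, ∑ i, c i * B i j = 1 := by
    intro j
    calc ∑ i, c i * B i j = ∑ i, ∑ k, B i k * B i j := by
          simp [hc, Finset.sum_mul]
      _ = ∑ k, ∑ i, B i k * B i j := Finset.sum_comm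
      _ = ∑ k, if k = j then (1:ℝ) else 0 := by
          exact Finset.sum_congr rfl fun k _ => h2 k j
      _ = 1 := by simp
  have hquad : ∑ u, ∑ v, M u v = ∑ i, hM.eigenvalues i * (c i)^2 := by
    calc ∑ u, ∑ v, M u v = ∑ u, ∑ j, M u j * (∑ i, c i * B i j) := by
          refine Finset.sum_congr rfl fun u _ => Finset.sum_congr rfl fun j _ => ?_
          rw [hones j, mul_one]
      _ = ∑ u, ∑ j, ∑ i, c i * (M u j * B i j) := by
          refine Finset.sum_congr rfl fun u _ => Finset.sum_congr rfl fun j _ => ?_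
          rw [Finset.mul_sum]
          exact Finset.sum_congr rfl fun i _ => by ring
      _ = ∑ u, ∑ i, ∑ j, c i * (M u j * B i j) :=
          Finset.sum_congr rfl fun u _ => Finset.sum_comm
      _ = ∑ i, ∑ u, ∑ j, c i * (M u j * B i j) := Finset.sum_comm
      _ = ∑ i, c i * ∑ u, ∑ j, M u j * B i j := by
          simp [Finset.mul_sum]
      _ = ∑ i, c i * (hM.eigenvalues i * c i) := by
          refine Finset.sum_congr rfl fun i _ => ?_
          congr 1
          calc ∑ u, ∑ j, M u j * B i j = ∑ u, hM.eigenvalues i * B i u := by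
                exact Finset.sum_congr rfl fun u _ => heig i u
            _ = hM.eigenvalues i * c i := by rw [← Finset.mul_sum]
      _ = ∑ i, hM.eigenvalues i * (c i)^2 := by
          exact Finset.sum_congr rfl fun i _ => by ring
  have hpar : ∑ i, (c i)^2 = (n : ℝ) := by
    calc ∑ i, (c i)^2 = ∑ i, ∑ j, B i j * c i := by
          refine Finset.sum_congr rfl fun i _ => ?_
          rw [← Finset.sum_mul, sq]
      _ = ∑ j, ∑ i, c i * B i j := by
          rw [Finset.sum_comm]
          exact Finset.sum_congr rfl fun j _ => Finset.sum_congr rfl fun i _ => mul_comm _ _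
      _ = ∑ j : Fin n, (1:ℝ) := Finset.sum_congr rfl fun j _ => hones j
      _ = n := by simp
  have hmem : ∀ i, hM.eigenvalues i ∈ {t : ℝ | ∃ x : Fin n → ℝ, x ≠ 0 ∧ M.mulVec x = t • x} :=
    fun i => ⟨_, by simpa using b.orthonormal.ne_zero i, hM.mulVec_eigenvectorBasis i⟩
  calc ∑ u, ∑ v, M u v = ∑ i, hM.eigenvalues i * (c i)^2 := hquad
    _ ≤ ∑ i, sSup {t : ℝ | ∃ x : Fin n → ℝ, x ≠ 0 ∧ M.mulVec x = t • x} * (c i)^2 := by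
        refine Finset.sum_le_sum fun i _ => ?_
        exact mul_le_mul_of_nonneg_right (le_csSup hBdd (hmem i)) (sq_nonneg _)
    _ = sSup {t : ℝ | ∃ x : Fin n → ℝ, x ≠ 0 ∧ M.mulVec x = t • x} * n := by
        rw [← Finset.mul_sum, hpar]

end Aux

/-- For every connected graph `G` of order `n` with `e(G)` edges,
`μ₁(D^Q(G)) ≥ 4(n-1) - 4e(G)/n`. -/
theorem stmt_18 {n : ℕ} (G : SimpleGraph (Fin n)) (hconn : G.Connected) :
    4 * ((n : ℝ) - 1) - 4 * (G.edgeFinset.card : ℝ) / n ≤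
      specMax (distSignlessLapMatrix G) := by
  classical
  obtain ⟨w⟩ := hconn.nonempty
  have hn : 0 < n := w.pos
  have hn' : (0:ℝ) < n := by exact_mod_cast hn
  set M := distSignlessLapMatrix G with hMdef
  have hM : M.IsHermitian := by
    ext u v
    by_cases h : u = v
    · subst h; simp [hMdef, distSignlessLapMatrix, distMatrix]
    · simp [hMdef, distSignlessLapMatrix, distMatrix, Matrix.conjTranspose_apply,
        Matrix.add_apply, Matrix.diagonal_apply_ne, h, Ne.symm h, SimpleGraph.dist_comm]
  have hBdd := bddAbove_spec_aux M
  have key := rayleigh_ones_aux M hM hBdd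
  have hspec : specMax M = sSup {t : ℝ | ∃ x : Fin n → ℝ, x ≠ 0 ∧ M.mulVec x = t • x} := rfl
  rw [← hspec] at key
  -- entrywise sum of M
  have hMsum : ∑ u, ∑ v, M u v = 2 * ∑ u, ∑ v, (G.dist u v : ℝ) := by
    have hrow : ∀ u, ∑ v, M u v = (transmission G u : ℝ) + ∑ v, (G.dist u v : ℝ) := by
      intro u
      simp only [hMdef, distSignlessLapMatrix, distMatrix, Matrix.add_apply]
      rw [Finset.sum_add_distrib]
      congr 1
      simp [Matrix.diagonal_apply, Finset.sum_ite_eq]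
    have htr : ∀ u, (transmission G u : ℝ) = ∑ v, (G.dist u v : ℝ) := by
      intro u
      simp [transmission]
    calc ∑ u, ∑ v, M u v = ∑ u, ((transmission G u : ℝ) + ∑ v, (G.dist u v : ℝ)) :=
          Finset.sum_congr rfl fun u _ => hrow u
      _ = ∑ u, (2 * ∑ v, (G.dist u v : ℝ)) := by
          refine Finset.sum_congr rfl fun u _ => ?_
          rw [htr u]; ring
      _ = 2 * ∑ u, ∑ v, (G.dist u v : ℝ) := by rw [← Finset.mul_sum]
  -- pointwise lower bound on distances
  have hpt : ∀ u v : Fin n, (if u = v then (0:ℝ) else 2) ≤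
      (G.dist u v : ℝ) + (if G.Adj u v then (1:ℝ) else 0) := by
    intro u v
    by_cases h : u = v
    · simp [h]
    · have hreach : G.Reachable u v := hconn.preconnected u v
      have hpos : 1 ≤ G.dist u v :=
        Nat.one_le_iff_ne_zero.mpr fun h0 => h (hreach.dist_eq_zero_iff.mp h0)
      by_cases hadj : G.Adj u v
      · simp only [if_neg h, if_pos hadj]
        have : (1:ℝ) ≤ (G.dist u v : ℝ) := by exact_mod_cast hpos
        linarith
      · have h2 : 2 ≤ G.dist u v := by
          rcases Nat.lt_or_ge (G.dist u v) 2 with hlt | hge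
          · have hd : G.dist u v = 1 := by omega
            exact absurd (SimpleGraph.dist_eq_one_iff_adj.mp hd) hadj
          · exact hge
        simp only [if_neg h, if_neg hadj, add_zero]
        exact_mod_cast h2
  have hdeg : ∀ u : Fin n, ∑ v, (if G.Adj u v then (1:ℝ) else 0) = (G.degree u : ℝ) := by
    intro u
    rw [Finset.sum_boole]
    congr 1
    rw [← SimpleGraph.neighborFinset_eq_filter]
    rfl
  have hdegsum : ∑ u : Fin n, (G.degree u : ℝ) = 2 * (G.edgeFinset.card : ℝ) := by
    rw [← Nat.cast_sum, SimpleGraph.sum_degrees_eq_twice_card_edges]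
    push_cast
    ring
  have hdiag : ∀ u : Fin n, ∑ v : Fin n, (if u = v then (0:ℝ) else 2) = 2 * n - 2 := by
    intro u
    have hsplit : ∀ v : Fin n, (if u = v then (0:ℝ) else 2)
        = 2 - (if u = v then (2:ℝ) else 0) := by
      intro v; split <;> ring
    simp only [hsplit]
    rw [Finset.sum_sub_distrib, Finset.sum_const, Finset.sum_ite_eq]
    simp [Finset.card_univ, mul_comm]
  have hT : (n:ℝ) * (2*n - 2) ≤ (∑ u, ∑ v, (G.dist u v : ℝ)) + 2 * (G.edgeFinset.card : ℝ) := by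
    calc (n:ℝ) * (2*n - 2) = ∑ _u : Fin n, (2*(n:ℝ) - 2) := by
          rw [Finset.sum_const, Finset.card_univ]
          simp [mul_comm]
      _ = ∑ u, ∑ v, (if u = v then (0:ℝ) else 2) :=
          Finset.sum_congr rfl fun u _ => (hdiag u).symm
      _ ≤ ∑ u, ∑ v, ((G.dist u v : ℝ) + (if G.Adj u v then (1:ℝ) else 0)) :=
          Finset.sum_le_sum fun u _ => Finset.sum_le_sum fun v _ => hpt u v
      _ = (∑ u, ∑ v, (G.dist u v : ℝ)) + ∑ u, ∑ v, (if G.Adj u v then (1:ℝ) else 0) := by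
          rw [← Finset.sum_add_distrib]
          exact Finset.sum_congr rfl fun u _ => Finset.sum_add_distrib
      _ = (∑ u, ∑ v, (G.dist u v : ℝ)) + 2 * (G.edgeFinset.card : ℝ) := by
          rw [Finset.sum_congr rfl fun u _ => hdeg u, hdegsum]
  have hfinal : 4*(n:ℝ)*((n:ℝ)-1) - 4*(G.edgeFinset.card : ℝ) ≤ specMax M * n := by
    have e1 : 2 * ((n:ℝ) * (2*n-2) - 2 * (G.edgeFinset.card : ℝ))
        = 4*(n:ℝ)*((n:ℝ)-1) - 4*(G.edgeFinset.card : ℝ) := by ring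
    linarith [hMsum, hT, key]
  have heq : 4 * ((n : ℝ) - 1) - 4 * (G.edgeFinset.card : ℝ) / n
      = (4*(n:ℝ)*((n:ℝ)-1) - 4*(G.edgeFinset.card : ℝ)) / n := by
    field_simp
  rw [heq, div_le_iff₀ hn']
  exact hfinal
end

section
/- Let G be a graph of order n with e(G) edges whose complement Ḡ is connected. Then the distance signless Laplacian spectral radius of the complement satisfies μ₁(D^Q(Ḡ)) ≥ 2(n − 1) + 4e(G)/n. -/
open scoped Classical
open Finset

open Matrix in
lemma aux_dotProduct_self_pos {n : ℕ} {x : Fin n → ℝ} (hx : x ≠ 0) :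
    0 < x ⬝ᵥ x := by
  obtain ⟨j, hj⟩ := Function.ne_iff.mp hx
  have hj' : x j ≠ 0 := by simpa using hj
  have : (0:ℝ) < x j * x j := mul_self_pos.mpr hj'
  refine Finset.sum_pos' (fun i _ => mul_self_nonneg (x i)) ⟨j, Finset.mem_univ j, this⟩

open Matrix in
lemma aux_rayleigh_upper {n : ℕ} {M : Matrix (Fin n) (Fin n) ℝ} (hM : M.IsHermitian)
    {μ : ℝ} (hμ : ∀ i, hM.eigenvalues i ≤ μ) (x : Fin n → ℝ) :
    x ⬝ᵥ (M *ᵥ x) ≤ μ * (x ⬝ᵥ x) := by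
  classical
  set U : Matrix (Fin n) (Fin n) ℝ := (hM.eigenvectorUnitary : Matrix (Fin n) (Fin n) ℝ) with hU
  have hstar : star U = Uᵀ := by
    rw [Matrix.star_eq_conjTranspose, Matrix.conjTranspose_eq_transpose_of_trivial]
  have hUUt : U * Uᵀ = 1 := by
    have h := (Matrix.mem_unitaryGroup_iff).mp hM.eigenvectorUnitary.2
    rwa [← hU, hstar] at h
  set y : Fin n → ℝ := x ᵥ* U with hy
  have hyUt : y = Uᵀ *ᵥ x := by rw [hy, Matrix.mulVec_transpose]
  have hyy : y ⬝ᵥ y = x ⬝ᵥ x := by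
    conv_lhs => rw [show y ⬝ᵥ y = y ⬝ᵥ (Uᵀ *ᵥ x) by rw [← hyUt]]
    rw [Matrix.dotProduct_mulVec, hy, Matrix.vecMul_vecMul, hUUt, Matrix.vecMul_one]
  have hdiag : (Matrix.diagonal (RCLike.ofReal ∘ hM.eigenvalues) : Matrix (Fin n) (Fin n) ℝ)
      = Matrix.diagonal hM.eigenvalues := rfl
  have key : x ⬝ᵥ (M *ᵥ x) = ∑ i, hM.eigenvalues i * (y i * y i) := by
    conv_lhs => rw [hM.spectral_theorem]
    rw [Unitary.conjStarAlgAut_apply, ← hU, hdiag, hstar, ← Matrix.mulVec_mulVec, ← Matrix.mulVec_mulVec, ← hyUt,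
      Matrix.dotProduct_mulVec, hy]
    simp only [dotProduct, Matrix.mulVec_diagonal]
    exact Finset.sum_congr rfl fun i _ => by ring
  rw [key, ← hyy]
  calc ∑ i, hM.eigenvalues i * (y i * y i) ≤ ∑ i, μ * (y i * y i) := by
        refine Finset.sum_le_sum fun i _ => ?_
        exact mul_le_mul_of_nonneg_right (hμ i) (mul_self_nonneg (y i))
    _ = μ * (y ⬝ᵥ y) := by rw [dotProduct, Finset.mul_sum]

lemma aux_trans_sum {n : ℕ} (G : SimpleGraph (Fin n)) (hconn : Gᶜ.Connected) :
    (n : ℝ) * ((n : ℝ) - 1) + 2 * (G.edgeFinset.card : ℝ) ≤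
      ∑ v, (transmission Gᶜ v : ℝ) := by
  classical
  have hpt : ∀ v u : Fin n,
      (if v = u then (0:ℝ) else 1) + (if G.Adj v u then (1:ℝ) else 0) ≤ (Gᶜ.dist v u : ℝ) := by
    intro v u
    by_cases hvu : v = u
    · subst hvu
      simp [SimpleGraph.dist_self]
    · have hpos : 0 < Gᶜ.dist v u := hconn.pos_dist_of_ne hvu
      by_cases hadj : G.Adj v u
      · have hne1 : Gᶜ.dist v u ≠ 1 := by
          intro h1
          exact (SimpleGraph.dist_eq_one_iff_adj.mp h1).2 hadj
        have h2 : 2 ≤ Gᶜ.dist v u := by omega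
        have : (2:ℝ) ≤ (Gᶜ.dist v u : ℝ) := by exact_mod_cast h2
        rw [if_neg hvu, if_pos hadj]
        linarith
      · have h1 : 1 ≤ Gᶜ.dist v u := hpos
        have : (1:ℝ) ≤ (Gᶜ.dist v u : ℝ) := by exact_mod_cast h1
        rw [if_neg hvu, if_neg hadj]
        linarith
  have hrow : ∀ v : Fin n,
      ((n : ℝ) - 1) + (G.degree v : ℝ) ≤ (transmission Gᶜ v : ℝ) := by
    intro v
    have h1 : ∑ u, (if v = u then (0:ℝ) else 1) = (n : ℝ) - 1 := by
      rw [show (fun u => if v = u then (0:ℝ) else 1) = fun u => 1 - (if v = u then (1:ℝ) else 0) by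
        funext u; by_cases h : v = u <;> simp [h]]
      rw [Finset.sum_sub_distrib, Finset.sum_ite_eq]
      simp
    have h2 : ∑ u, (if G.Adj v u then (1:ℝ) else 0) = (G.degree v : ℝ) := by
      rw [Finset.sum_boole, SimpleGraph.degree, SimpleGraph.neighborFinset_eq_filter]
    have h3 : (transmission Gᶜ v : ℝ) = ∑ u, (Gᶜ.dist v u : ℝ) := by
      rw [transmission]; push_cast; rfl
    calc ((n : ℝ) - 1) + (G.degree v : ℝ)
        = ∑ u, ((if v = u then (0:ℝ) else 1) + (if G.Adj v u then (1:ℝ) else 0)) := by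
          rw [Finset.sum_add_distrib, h1, h2]
      _ ≤ ∑ u, (Gᶜ.dist v u : ℝ) := Finset.sum_le_sum fun u _ => hpt v u
      _ = (transmission Gᶜ v : ℝ) := h3.symm
  calc (n : ℝ) * ((n : ℝ) - 1) + 2 * (G.edgeFinset.card : ℝ)
      = ∑ _v : Fin n, ((n : ℝ) - 1) + ∑ v, (G.degree v : ℝ) := by
        rw [Finset.sum_const, Finset.card_univ, Fintype.card_fin]
        have := G.sum_degrees_eq_twice_card_edges
        have h2 : ∑ v, (G.degree v : ℝ) = 2 * (G.edgeFinset.card : ℝ) := by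
          exact_mod_cast congrArg (Nat.cast : ℕ → ℝ) this
        rw [h2]; ring
    _ = ∑ v, (((n : ℝ) - 1) + (G.degree v : ℝ)) := by rw [Finset.sum_add_distrib]
    _ ≤ ∑ v, (transmission Gᶜ v : ℝ) := Finset.sum_le_sum fun v _ => hrow v

open Matrix

/-- If `Gᶜ` is connected then `μ₁(D^Q(Gᶜ)) ≥ 2(n-1) + 4e(G)/n`. -/
theorem stmt_19 {n : ℕ} (G : SimpleGraph (Fin n)) (hconn : Gᶜ.Connected) :
    2 * ((n : ℝ) - 1) + 4 * (G.edgeFinset.card : ℝ) / n ≤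
      specMax (distSignlessLapMatrix Gᶜ) := by
  classical
  have hne : Nonempty (Fin n) := hconn.nonempty
  have hn : 0 < n := Fin.pos_iff_nonempty.mpr hne
  have hn' : (0:ℝ) < n := by exact_mod_cast hn
  set M : Matrix (Fin n) (Fin n) ℝ := distSignlessLapMatrix Gᶜ with hMdef
  have hM : M.IsHermitian := by
    rw [Matrix.IsHermitian]
    ext i j
    simp only [hMdef, distSignlessLapMatrix, distMatrix, Matrix.conjTranspose_apply,
      Matrix.add_apply, Matrix.diagonal_apply, star_trivial]
    rw [SimpleGraph.dist_comm]
    by_cases h : i = j <;> simp [h, eq_comm]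
  obtain ⟨i₀, hi₀⟩ : ∃ i₀, ∀ i, hM.eigenvalues i ≤ hM.eigenvalues i₀ :=
    Finite.exists_max hM.eigenvalues
  set μ : ℝ := hM.eigenvalues i₀ with hμdef
  set S : Set ℝ := {t : ℝ | ∃ x : Fin n → ℝ, x ≠ 0 ∧ M.mulVec x = t • x} with hS
  have hmem : μ ∈ S := by
    refine ⟨⇑(hM.eigenvectorBasis i₀), ?_, hM.mulVec_eigenvectorBasis i₀⟩
    intro h0
    have hb0 : hM.eigenvectorBasis i₀ = 0 := by
      ext j; exact congrFun h0 j
    have hnorm := hM.eigenvectorBasis.orthonormal.1 i₀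
    rw [hb0] at hnorm
    simp at hnorm
  have hub : ∀ t ∈ S, t ≤ μ := by
    rintro t ⟨x, hx, hEq⟩
    have hxx : 0 < x ⬝ᵥ x := aux_dotProduct_self_pos hx
    have h1 : x ⬝ᵥ (M *ᵥ x) = t * (x ⬝ᵥ x) := by
      rw [hEq, dotProduct_smul, smul_eq_mul]
    have h2 := aux_rayleigh_upper hM hi₀ x
    rw [h1] at h2
    exact le_of_mul_le_mul_right h2 hxx
  have hbdd : BddAbove S := ⟨μ, fun t ht => hub t ht⟩
  have hle : μ ≤ sSup S := le_csSup hbdd hmem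
  -- Rayleigh with the all-ones vector
  have hones := aux_rayleigh_upper hM hi₀ (fun _ => (1:ℝ))
  have hlhs : (fun _ => (1:ℝ) : Fin n → ℝ) ⬝ᵥ (M *ᵥ (fun _ => (1:ℝ) : Fin n → ℝ)) = ∑ v, 2 * (transmission Gᶜ v : ℝ) := by
    simp only [dotProduct, Matrix.mulVec, one_mul, mul_one]
    refine Finset.sum_congr rfl fun i _ => ?_
    simp only [hMdef, distSignlessLapMatrix, distMatrix, Matrix.add_apply,
      Matrix.diagonal_apply, Finset.sum_add_distrib]
    rw [Finset.sum_ite_eq, if_pos (Finset.mem_univ i)]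
    have : ∑ j, (Gᶜ.dist i j : ℝ) = (transmission Gᶜ i : ℝ) := by
      rw [transmission]; push_cast; rfl
    rw [this]; ring
  have hrhs : ((fun _ => (1:ℝ) : Fin n → ℝ) ⬝ᵥ (fun _ => (1:ℝ) : Fin n → ℝ)) = (n : ℝ) := by
    simp [dotProduct]
  rw [hlhs, hrhs] at hones
  have hsum := aux_trans_sum G hconn
  have hkey : 2 * ((n : ℝ) * ((n : ℝ) - 1) + 2 * (G.edgeFinset.card : ℝ)) ≤ μ * n := by
    calc 2 * ((n : ℝ) * ((n : ℝ) - 1) + 2 * (G.edgeFinset.card : ℝ))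
        ≤ 2 * ∑ v, (transmission Gᶜ v : ℝ) := by linarith
      _ = ∑ v, 2 * (transmission Gᶜ v : ℝ) := by rw [Finset.mul_sum]
      _ ≤ μ * n := hones
  have hfinal : 2 * ((n : ℝ) - 1) + 4 * (G.edgeFinset.card : ℝ) / n ≤ μ := by
    rw [← mul_le_mul_iff_left₀ hn']
    have hexp : (2 * ((n : ℝ) - 1) + 4 * (G.edgeFinset.card : ℝ) / n) * n
        = 2 * ((n : ℝ) * ((n : ℝ) - 1) + 2 * (G.edgeFinset.card : ℝ)) := by
      field_simp; ring
    rw [hexp]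
    exact hkey
  calc 2 * ((n : ℝ) - 1) + 4 * (G.edgeFinset.card : ℝ) / n ≤ μ := hfinal
    _ ≤ sSup S := hle
end
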